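/- Let f(x) = x⁴ + (x² - x³)(1 + √(x² + 1)). Let x₁ ≥ x₂ ≥ … ≥ x_b ≥ 0 and y₁ ≥ y₂ ≥ … ≥ y_{b+1} ≥ 0 with ∑_{i=1}^b x_i = ∑_{j=1}^{b+1} y_j = 1 and y_i ≤ x_i for all i ∈ {1,…,b}. Then ∑_{i=1}^{b+1} f(y_i) ≤ ∑_{i=1}^b f(x_i). -/

import Mathlib

noncomputable def F (x : ℝ) : ℝ := x^4 + (x^2 - x^3)*(1 + Real.sqrt (x^2+1))
noncomputable def F1 (x : ℝ) : ℝ :=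
  4*x^3 + (2*x-3*x^2)*(1+Real.sqrt (x^2+1)) + (x^2-x^3)*(x/Real.sqrt (x^2+1))
noncomputable def F2 (x : ℝ) : ℝ :=
  12*x^2 + (2-6*x)*(1+Real.sqrt (x^2+1)) + 2*(2*x-3*x^2)*(x/Real.sqrt (x^2+1))
    + (x^2-x^3)/(Real.sqrt (x^2+1))^3

lemma spos (x : ℝ) : 0 < Real.sqrt (x^2+1) := Real.sqrt_pos.2 (by positivity)

lemma ssq (x : ℝ) : (Real.sqrt (x^2+1))^2 = x^2+1 := Real.sq_sqrt (by positivity)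

lemma hds (x : ℝ) : HasDerivAt (fun x => Real.sqrt (x^2+1)) (x / Real.sqrt (x^2+1)) x := by
  have h := (Real.hasDerivAt_sqrt (show x^2+1 ≠ 0 by positivity)).comp x
    ((hasDerivAt_pow 2 x).add_const 1)
  refine h.congr_deriv ?_
  symm
  have := (spos x).ne'
  field_simp
  ring

lemma hdF (x : ℝ) : HasDerivAt F (F1 x) x := by
  have h : HasDerivAt F
      (4*x^3 + ((2*x - 3*x^2)*(1 + Real.sqrt (x^2+1)) + (x^2-x^3)*(0 + x / Real.sqrt (x^2+1)))) x := by
    have h1 : HasDerivAt (fun x : ℝ => x^4) (4*x^3) x := by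
      simpa using hasDerivAt_pow 4 x
    have h2 : HasDerivAt (fun x : ℝ => x^2 - x^3) (2*x - 3*x^2) x := by
      simpa using (hasDerivAt_pow 2 x).fun_sub (hasDerivAt_pow 3 x)
    have h3 : HasDerivAt (fun x : ℝ => 1 + Real.sqrt (x^2+1)) (0 + x / Real.sqrt (x^2+1)) x :=
      (hasDerivAt_const x 1).add (hds x)
    exact h1.fun_add (h2.fun_mul h3)
  convert h using 1
  simp [F1]; ring

lemma hdF1 (x : ℝ) : HasDerivAt F1 (F2 x) x := by
  have hne := (spos x).ne'
  have hq : HasDerivAt (fun x : ℝ => x / Real.sqrt (x^2+1)) (1/(Real.sqrt (x^2+1))^3) x := by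
    have h := (hasDerivAt_id x).div (hds x) hne
    refine h.congr_deriv ?_
    symm
    simp only [id_eq]
    rw [div_eq_div_iff (by positivity) (by positivity)]
    have h2 := ssq x
    field_simp
    nlinarith [ssq x, spos x]
  have h1 : HasDerivAt (fun x : ℝ => 4*x^3) (12*x^2) x := by
    have := (hasDerivAt_pow 3 x).const_mul 4
    refine this.congr_deriv ?_
    symm; ring
  have h2 : HasDerivAt (fun x : ℝ => 2*x-3*x^2) (2-6*x) x := by
    have := ((hasDerivAt_id x).const_mul 2).sub ((hasDerivAt_pow 2 x).const_mul 3)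
    refine this.congr_deriv ?_
    symm; ring
  have h3 : HasDerivAt (fun x : ℝ => 1 + Real.sqrt (x^2+1)) (0 + x / Real.sqrt (x^2+1)) x :=
    (hasDerivAt_const x 1).add (hds x)
  have h4 : HasDerivAt (fun x : ℝ => x^2 - x^3) (2*x - 3*x^2) x := by
    simpa using (hasDerivAt_pow 2 x).fun_sub (hasDerivAt_pow 3 x)
  have h := h1.add (((h2.mul h3).add (h4.mul hq)))
  have heq : F1 = fun x : ℝ => 4*x^3 + ((2*x-3*x^2)*(1+Real.sqrt (x^2+1)) + (x^2-x^3)*(x/Real.sqrt (x^2+1))) := by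
    funext t; simp [F1]; ring
  rw [heq]
  refine h.congr_deriv ?_
  symm
  simp [F2]
  field_simp
  ring

lemma F2nn {x : ℝ} (hx0 : 0 ≤ x) (hx1 : x ≤ 1) : 0 ≤ F2 x := by
  set s := Real.sqrt (x^2+1) with hs
  have hsp : 0 < s := spos x
  have hs2 : s^2 = x^2+1 := ssq x
  have hs1 : 1 ≤ s := by nlinarith
  have hsle : s ≤ 3/2 := by nlinarith
  have key : F2 x * s^3 = 12*x^2*s^3 + (2-6*x)*(s^3+s^4) + 2*(2*x-3*x^2)*x*s^2 + (x^2-x^3) := by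
    simp only [F2, ← hs]
    field_simp
  have hE : 0 ≤ 12*x^2*s^3 + (2-6*x)*(s^3+s^4) + 2*(2*x-3*x^2)*x*s^2 + (x^2-x^3) := by
    have h3 : s^3 = s*(x^2+1) := by nlinarith
    have h4 : s^4 = (x^2+1)^2 := by nlinarith
    rw [h3, h4, hs2]
    nlinarith [sq_nonneg (x*(1-x)), sq_nonneg x, sq_nonneg (1-x), mul_nonneg hx0 (sub_nonneg.2 hx1),
      mul_nonneg (mul_nonneg hx0 hx0) (sub_nonneg.2 hsle), sq_nonneg (x - 1/2),
      mul_nonneg (mul_nonneg hx0 hx0) (sub_nonneg.2 hs1)]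
  nlinarith [pow_pos hsp 3]

lemma Fconvex : ConvexOn ℝ (Set.Icc (0:ℝ) 1) F := by
  apply convexOn_of_hasDerivWithinAt2_nonneg (f' := F1) (f'' := F2) (convex_Icc 0 1)
  · exact fun t _ => (hdF t).continuousAt.continuousWithinAt
  · exact fun t _ => (hdF t).hasDerivWithinAt
  · exact fun t _ => (hdF1 t).hasDerivWithinAt
  · rw [interior_Icc]
    exact fun t ht => F2nn ht.1.le ht.2.le

lemma F0 : F 0 = 0 := by simp [F]



theorem majorization_sum_f_le (b : ℕ) (hb : 1 ≤ b) (x : Fin b → ℝ) (y : Fin (b + 1) → ℝ)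
    (hxmono : ∀ i j : Fin b, i ≤ j → x j ≤ x i)
    (hymono : ∀ i j : Fin (b + 1), i ≤ j → y j ≤ y i)
    (hxnn : ∀ i, 0 ≤ x i) (hynn : ∀ i, 0 ≤ y i)
    (hxsum : ∑ i, x i = 1) (hysum : ∑ j, y j = 1)
    (hle : ∀ i : Fin b, y (Fin.castSucc i) ≤ x i) :
    (∑ j, (y j ^ 4 + (y j ^ 2 - y j ^ 3) * (1 + Real.sqrt (y j ^ 2 + 1))))
      ≤ ∑ i, (x i ^ 4 + (x i ^ 2 - x i ^ 3) * (1 + Real.sqrt (x i ^ 2 + 1))) := by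
  show ∑ j, F (y j) ≤ ∑ i, F (x i)
  have hx1 : ∀ i, x i ≤ 1 := fun i =>
    hxsum ▸ Finset.single_le_sum (fun j _ => hxnn j) (Finset.mem_univ i)
  have hy1 : ∀ j, y j ≤ 1 := fun j =>
    hysum ▸ Finset.single_le_sum (fun k _ => hynn k) (Finset.mem_univ j)
  set t := y (Fin.last b) with htdef
  have htsum : ∑ i : Fin b, (x i - y i.castSucc) = t := by
    rw [Finset.sum_sub_distrib, hxsum]
    rw [Fin.sum_univ_castSucc] at hysum
    linarith
  have hdnn : ∀ i : Fin b, 0 ≤ x i - y i.castSucc := fun i => sub_nonneg.2 (hle i)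
  rw [Fin.sum_univ_castSucc (f := fun j => F (y j))]
  suffices h : F t ≤ ∑ i : Fin b, (F (x i) - F (y i.castSucc)) by
    rw [Finset.sum_sub_distrib] at h
    linarith
  rcases eq_or_lt_of_le (hynn (Fin.last b)) with h0 | h0
  · have ht0 : t = 0 := by rw [htdef, ← h0]
    have hall := (Finset.sum_eq_zero_iff_of_nonneg (fun i _ => hdnn i)).1
      (by rw [htsum, ht0])
    have hFt : F t = 0 := by rw [ht0]; exact F0
    rw [hFt]
    apply Finset.sum_nonneg
    intro i _
    have hz := hall i (Finset.mem_univ i)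
    rw [show x i = y i.castSucc from by linarith]
    simp
  · set r := F t / t with hrdef
    have hper : ∀ i ∈ Finset.univ, r * (x i - y i.castSucc) ≤ F (x i) - F (y i.castSucc) := by
      intro i _
      rcases eq_or_lt_of_le (hle i) with heq | hlt
      · rw [heq]; simp
      · have htley : t ≤ y i.castSucc := hymono _ _ (Fin.le_last _)
        have hxpos : 0 < x i := lt_of_lt_of_le h0 (le_trans htley (hle i))
        have hm0 : (0:ℝ) ∈ Set.Icc (0:ℝ) 1 := by norm_num
        have hmt : t ∈ Set.Icc (0:ℝ) 1 := ⟨hynn _, hy1 _⟩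
        have hmx : x i ∈ Set.Icc (0:ℝ) 1 := ⟨hxnn i, hx1 i⟩
        have hmy : y i.castSucc ∈ Set.Icc (0:ℝ) 1 := ⟨hynn _, hy1 _⟩
        have h1 : (F t - F 0) / (t - 0) ≤ (F (x i) - F 0) / (x i - 0) :=
          Fconvex.secant_mono hm0 hmt hmx h0.ne' hxpos.ne' (le_trans htley (hle i))
        have h2 : (F 0 - F (x i)) / (0 - x i) ≤ (F (y i.castSucc) - F (x i)) / (y i.castSucc - x i) :=
          Fconvex.secant_mono hmx hm0 hmy hxpos.ne (ne_of_lt hlt) (hynn _)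
        rw [F0] at h1 h2
        have h2' : (F (x i)) / (x i) ≤ (F (x i) - F (y i.castSucc)) / (x i - y i.castSucc) := by
          have e1 : (0 - F (x i)) / (0 - x i) = F (x i) / x i := by
            rw [div_eq_div_iff (by linarith) hxpos.ne']; ring
          have e2 : (F (y i.castSucc) - F (x i)) / (y i.castSucc - x i)
              = (F (x i) - F (y i.castSucc)) / (x i - y i.castSucc) := by
            rw [div_eq_div_iff (by linarith) (by linarith)]; ring
          rw [e1, e2] at h2
          exact h2
        have hr : r ≤ (F (x i) - F (y i.castSucc)) / (x i - y i.castSucc) := by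
          have : r = (F t - 0) / (t - 0) := by rw [hrdef]; ring_nf
          calc r = (F t - 0) / (t - 0) := this
            _ ≤ (F (x i) - 0) / (x i - 0) := h1
            _ = F (x i) / x i := by ring_nf
            _ ≤ _ := h2'
        rw [le_div_iff₀ (by linarith)] at hr
        linarith
    calc F t = r * t := by rw [hrdef, div_mul_cancel₀ _ (show t ≠ 0 from h0.ne')]
      _ = r * ∑ i : Fin b, (x i - y i.castSucc) := by rw [htsum]
      _ = ∑ i : Fin b, r * (x i - y i.castSucc) := Finset.mul_sum _ _ _
      _ ≤ _ := Finset.sum_le_sum hper
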